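/- Let A be Schur stable, B symmetric positive semidefinite, and suppose Σ is symmetric with A Σ Aᵀ − Σ + B ⪯ 0. If Σζ = Σ_{k=0}^∞ A^k B (Aᵀ)^k is the unique solution of the Lyapunov equation, then for any matrices N (of compatible dimensions), N Σ Nᵀ ⪰ N Σζ Nᵀ. -/

import Mathlib

open Matrix Filter Topology
open scoped NNReal ENNReal

section Stmt7Aux

attribute [local instance] Matrix.frobeniusSeminormedAddCommGroup
  Matrix.frobeniusNormedAddCommGroup Matrix.frobeniusNormedSpace
  Matrix.frobeniusNormedRing Matrix.frobeniusNormedAlgebra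

variable {n : ℕ}

private lemma exists_geom (A : Matrix (Fin n) (Fin n) ℝ)
    (hA : ∀ μ ∈ spectrum ℂ (A.map (Complex.ofReal)), ‖μ‖ < 1) :
    ∃ r : ℝ, 0 ≤ r ∧ r < 1 ∧ ∀ᶠ k in atTop, ‖A ^ k‖ ≤ r ^ k := by
  set Ac : Matrix (Fin n) (Fin n) ℂ := A.map Complex.ofReal with hAcdef
  have hρ : spectralRadius ℂ Ac < 1 := by
    rcases (spectrum ℂ Ac).eq_empty_or_nonempty with h | h
    · rw [spectralRadius]
      simp [h]
    · obtain ⟨μ₀, hμ₀, hmax⟩ := (spectrum.isCompact Ac).exists_isMaxOn h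
        continuous_norm.continuousOn
      calc spectralRadius ℂ Ac ≤ (‖μ₀‖₊ : ℝ≥0∞) := by
            refine iSup₂_le fun μ hμ => ?_
            exact_mod_cast (hmax hμ : ‖μ‖ ≤ ‖μ₀‖)
        _ < 1 := by exact_mod_cast hA μ₀ hμ₀
  obtain ⟨r, hr1, hr2⟩ := ENNReal.lt_iff_exists_nnreal_btwn.mp hρ
  have hrlt : (r : ℝ) < 1 := by exact_mod_cast hr2
  have hgel := spectrum.pow_nnnorm_pow_one_div_tendsto_nhds_spectralRadius Ac
  have hev : ∀ᶠ k : ℕ in atTop, (‖Ac ^ k‖₊ : ℝ≥0∞) ^ (1 / (k : ℝ)) < (r : ℝ≥0∞) :=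
    hgel.eventually_lt_const hr1
  refine ⟨r, r.coe_nonneg, hrlt, ?_⟩
  filter_upwards [hev, eventually_ge_atTop 1] with k hk hk1
  have hk0 : (k : ℝ) ≠ 0 := Nat.cast_ne_zero.mpr (by omega)
  have h1 : ((‖Ac ^ k‖₊ : ℝ≥0∞) ^ (1 / (k : ℝ))) ^ (k : ℝ) ≤ (r : ℝ≥0∞) ^ (k : ℝ) :=
    ENNReal.rpow_le_rpow hk.le (Nat.cast_nonneg k)
  rw [← ENNReal.rpow_mul, one_div_mul_cancel hk0, ENNReal.rpow_one,
    ENNReal.rpow_natCast, ← ENNReal.coe_pow] at h1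
  have h2 : ‖Ac ^ k‖₊ ≤ r ^ k := by exact_mod_cast h1
  have hmap : Ac ^ k = (A ^ k).map Complex.ofReal := by
    have := map_pow (Complex.ofRealHom.mapMatrix : Matrix (Fin n) (Fin n) ℝ →+* _) A k
    simpa [RingHom.mapMatrix_apply, Complex.ofRealHom] using this.symm
  have hnorm : ‖A ^ k‖₊ = ‖Ac ^ k‖₊ := by
    rw [hmap, Matrix.frobenius_nnnorm_map_eq _ _ fun a => Complex.nnnorm_real a]
  have : ‖A ^ k‖₊ ≤ r ^ k := hnorm ▸ h2
  calc ‖A ^ k‖ = ((‖A ^ k‖₊ : ℝ≥0) : ℝ) := rfl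
    _ ≤ ((r ^ k : ℝ≥0) : ℝ) := by exact_mod_cast this
    _ = (r : ℝ) ^ k := by push_cast; ring

private lemma summable_conj (A M : Matrix (Fin n) (Fin n) ℝ) {r : ℝ}
    (hr0 : 0 ≤ r) (hr1 : r < 1) (hb : ∀ᶠ k in atTop, ‖A ^ k‖ ≤ r ^ k) :
    Summable fun k : ℕ => A ^ k * M * (Aᵀ) ^ k := by
  refine Summable.of_norm_bounded_eventually_nat (g := fun k => ‖M‖ * (r ^ 2) ^ k)
    ((summable_geometric_of_lt_one (by positivity) (by nlinarith)).mul_left _) ?_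
  filter_upwards [hb] with k hk
  have hT : ‖(Aᵀ) ^ k‖ = ‖A ^ k‖ := by
    rw [← Matrix.transpose_pow, Matrix.frobenius_norm_transpose]
  calc ‖A ^ k * M * (Aᵀ) ^ k‖
      ≤ ‖A ^ k * M‖ * ‖(Aᵀ) ^ k‖ := norm_mul_le _ _
    _ ≤ ‖A ^ k‖ * ‖M‖ * ‖(Aᵀ) ^ k‖ :=
        mul_le_mul_of_nonneg_right (norm_mul_le _ _) (norm_nonneg _)
    _ = ‖A ^ k‖ * ‖M‖ * ‖A ^ k‖ := by rw [hT]
    _ ≤ r ^ k * ‖M‖ * r ^ k := by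
        have h0 : (0:ℝ) ≤ ‖A ^ k‖ := norm_nonneg _
        have hM : (0:ℝ) ≤ ‖M‖ := norm_nonneg _
        exact mul_le_mul (mul_le_mul_of_nonneg_right hk hM) hk h0 (by positivity)
    _ = ‖M‖ * (r ^ 2) ^ k := by ring

private lemma tendsto_conj (A Y : Matrix (Fin n) (Fin n) ℝ) {r : ℝ}
    (hr0 : 0 ≤ r) (hr1 : r < 1) (hb : ∀ᶠ k in atTop, ‖A ^ k‖ ≤ r ^ k) :
    Tendsto (fun k : ℕ => A ^ k * Y * (Aᵀ) ^ k) atTop (𝓝 0) := by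
  have hg : Tendsto (fun k : ℕ => ‖Y‖ * (r ^ 2) ^ k) atTop (𝓝 0) := by
    simpa using (tendsto_pow_atTop_nhds_zero_of_lt_one (by positivity)
      (by nlinarith : r ^ 2 < 1)).const_mul ‖Y‖
  have hev : ∀ᶠ k : ℕ in atTop, ‖A ^ k * Y * (Aᵀ) ^ k‖ ≤ ‖Y‖ * (r ^ 2) ^ k := by
    filter_upwards [hb] with k hk
    have hT : ‖(Aᵀ) ^ k‖ = ‖A ^ k‖ := by
      rw [← Matrix.transpose_pow, Matrix.frobenius_norm_transpose]
    calc ‖A ^ k * Y * (Aᵀ) ^ k‖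
      ≤ ‖A ^ k * Y‖ * ‖(Aᵀ) ^ k‖ := norm_mul_le _ _
    _ ≤ ‖A ^ k‖ * ‖Y‖ * ‖(Aᵀ) ^ k‖ :=
        mul_le_mul_of_nonneg_right (norm_mul_le _ _) (norm_nonneg _)
    _ = ‖A ^ k‖ * ‖Y‖ * ‖A ^ k‖ := by rw [hT]
    _ ≤ r ^ k * ‖Y‖ * r ^ k := by
        have h0 : (0:ℝ) ≤ ‖A ^ k‖ := norm_nonneg _
        have hY : (0:ℝ) ≤ ‖Y‖ := norm_nonneg _
        exact mul_le_mul (mul_le_mul_of_nonneg_right hk hY) hk h0 (by positivity)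
    _ = ‖Y‖ * (r ^ 2) ^ k := by ring
  exact squeeze_zero_norm' hev hg

private lemma hasSum_lyap (A M Y : Matrix (Fin n) (Fin n) ℝ) {r : ℝ}
    (hr0 : 0 ≤ r) (hr1 : r < 1) (hb : ∀ᶠ k in atTop, ‖A ^ k‖ ≤ r ^ k)
    (hY : A * Y * Aᵀ - Y + M = 0) :
    HasSum (fun k : ℕ => A ^ k * M * (Aᵀ) ^ k) Y := by
  have hsum := summable_conj A M hr0 hr1 hb
  have hAY : A * Y * Aᵀ = Y - M := by
    rw [← sub_eq_zero]
    have h : A * Y * Aᵀ - (Y - M) = A * Y * Aᵀ - Y + M := by abel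
    rw [h]; exact hY
  have hpart : ∀ K : ℕ, ∑ k ∈ Finset.range K, A ^ k * M * (Aᵀ) ^ k
      = Y - A ^ K * Y * (Aᵀ) ^ K := by
    intro K
    induction K with
    | zero => simp
    | succ K ih =>
      rw [Finset.sum_range_succ, ih]
      have hstep : A ^ (K + 1) * Y * (Aᵀ) ^ (K + 1)
          = A ^ K * (A * Y * Aᵀ) * (Aᵀ) ^ K := by
        rw [pow_succ, pow_succ']
        noncomm_ring
      rw [hstep, hAY]
      simp only [mul_sub, sub_mul]
      abel
  have h2 : Tendsto (fun K => ∑ k ∈ Finset.range K, A ^ k * M * (Aᵀ) ^ k) atTop (𝓝 Y) := by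
    simp only [hpart]
    simpa using tendsto_const_nhds.sub (tendsto_conj A Y hr0 hr1 hb)
  have h3 := hsum.hasSum.tendsto_sum_nat
  have h4 : ∑' k : ℕ, A ^ k * M * (Aᵀ) ^ k = Y := tendsto_nhds_unique h3 h2
  exact h4 ▸ hsum.hasSum

private lemma posSemidef_hasSum {f : ℕ → Matrix (Fin n) (Fin n) ℝ}
    {D : Matrix (Fin n) (Fin n) ℝ} (hf : HasSum f D) (h : ∀ k, (f k).PosSemidef) :
    D.PosSemidef := by
  refine PosSemidef.of_dotProduct_mulVec_nonneg ?_ ?_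
  · have hT := hf.matrix_conjTranspose
    have heq : (fun k => (f k)ᴴ) = f := funext fun k => (h k).1
    rw [heq] at hT
    exact hT.unique hf
  · intro x
    let q : Matrix (Fin n) (Fin n) ℝ →ₗ[ℝ] ℝ :=
      { toFun := fun M => star x ⬝ᵥ M *ᵥ x
        map_add' := fun M N' => by simp [add_mulVec, dotProduct_add]
        map_smul' := fun c M => by simp [smul_mulVec, dotProduct_smul] }
    have hq : HasSum (fun k => star x ⬝ᵥ (f k) *ᵥ x) (star x ⬝ᵥ D *ᵥ x) :=
      hf.mapL q.toContinuousLinearMap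
    exact hasSum_le (fun k => (h k).dotProduct_mulVec_nonneg x) hasSum_zero hq

/-- Bound propagation: if `A` is Schur stable, `B ⪰ 0`, `S` is symmetric with
`A S Aᵀ − S + B ⪯ 0`, and `Sζ = ∑_{k≥0} A^k B (Aᵀ)^k` is the solution of the Lyapunov
equation, then `N S Nᵀ ⪰ N Sζ Nᵀ` for any compatible `N`. -/
theorem stmt_7 {n p : ℕ} (A B S : Matrix (Fin n) (Fin n) ℝ)
    (hA : ∀ μ ∈ spectrum ℂ (A.map (Complex.ofReal)), ‖μ‖ < 1)
    (hB : B.PosSemidef) (hS : S.IsHermitian)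
    (hineq : (-(A * S * Aᵀ - S + B)).PosSemidef)
    (Sζ : Matrix (Fin n) (Fin n) ℝ) (hSζ : Sζ = ∑' k : ℕ, A ^ k * B * (Aᵀ) ^ k)
    (N : Matrix (Fin p) (Fin n) ℝ) :
    (N * S * Nᵀ - N * Sζ * Nᵀ).PosSemidef := by
  obtain ⟨r, hr0, hr1, hb⟩ := exists_geom A hA
  set C : Matrix (Fin n) (Fin n) ℝ := -(A * S * Aᵀ - S + B) with hCdef
  have hsumB : Summable fun k : ℕ => A ^ k * B * (Aᵀ) ^ k := summable_conj A B hr0 hr1 hb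
  have hSum : HasSum (fun k : ℕ => A ^ k * B * (Aᵀ) ^ k) Sζ := by
    rw [hSζ]; exact hsumB.hasSum
  have hAζ : A * Sζ * Aᵀ = Sζ - B := by
    have h1 : HasSum (fun k : ℕ => A * (A ^ k * B * (Aᵀ) ^ k) * Aᵀ) (A * Sζ * Aᵀ) :=
      (hSum.mul_left A).mul_right Aᵀ
    have h2 : (fun k : ℕ => A * (A ^ k * B * (Aᵀ) ^ k) * Aᵀ)
        = fun k : ℕ => A ^ (k + 1) * B * (Aᵀ) ^ (k + 1) := by
      funext k
      rw [pow_succ', pow_succ]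
      noncomm_ring
    rw [h2] at h1
    have h3 : HasSum (fun k : ℕ => A ^ (k + 1) * B * (Aᵀ) ^ (k + 1)) (Sζ - B) := by
      refine (hasSum_nat_add_iff (f := fun k : ℕ => A ^ k * B * (Aᵀ) ^ k) 1).mpr ?_
      simpa using hSum
    exact h1.unique h3
  have hC : C.PosSemidef := hineq
  have hD : A * (S - Sζ) * Aᵀ - (S - Sζ) + C = 0 := by
    rw [hCdef]
    simp only [mul_sub, sub_mul, hAζ]
    abel
  have hDsum : HasSum (fun k : ℕ => A ^ k * C * (Aᵀ) ^ k) (S - Sζ) :=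
    hasSum_lyap A C (S - Sζ) hr0 hr1 hb hD
  have hterm : ∀ k : ℕ, (A ^ k * C * (Aᵀ) ^ k).PosSemidef := by
    intro k
    have := hC.mul_mul_conjTranspose_same (A ^ k)
    rwa [conjTranspose_eq_transpose_of_trivial, Matrix.transpose_pow] at this
  have hDpsd : (S - Sζ).PosSemidef := posSemidef_hasSum hDsum hterm
  have hfin := hDpsd.mul_mul_conjTranspose_same N
  rw [conjTranspose_eq_transpose_of_trivial] at hfin
  have heq : N * (S - Sζ) * Nᵀ = N * S * Nᵀ - N * Sζ * Nᵀ := by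
    rw [Matrix.mul_sub, Matrix.sub_mul]
  rwa [heq] at hfin

end Stmt7Aux
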